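/- Let 0 < β < 2 and let v : ℝ → ℝ be a 2π-periodic C² function, and set u(x) = v(x) + Λ^β v(x). If u(x) ≥ 0 for all x, then 0 ≤ v(x) ≤ max_x u(x) for every x ∈ ℝ; in particular sup_x |v(x)| ≤ sup_x |u(x)|. -/

import Mathlib

open MeasureTheory Real

/-- The constant `c_σ = Γ(1+σ) cos((1−σ)π/2) / π`. -/
noncomputable def cFrac (σ : ℝ) : ℝ :=
  Real.Gamma (1 + σ) * Real.cos ((1 - σ) * Real.pi / 2) / Real.pi

/-- The periodized kernel `K_σ(η) = ∑_{k∈ℤ} |η + 2kπ|^{-(1+σ)}`. -/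
noncomputable def Kper (σ η : ℝ) : ℝ :=
  ∑' k : ℤ, |η + 2 * (k : ℝ) * Real.pi| ^ (-(1 + σ))

/-- The fractional Laplacian `Λ^σ f` of a `2π`-periodic function, defined by
`Λ^σ f(x) = (c_σ/2) ∫_{-π}^{π} (2f(x) − f(x+η) − f(x−η)) K_σ(η) dη`. -/
noncomputable def fracLap (σ : ℝ) (f : ℝ → ℝ) (x : ℝ) : ℝ :=
  (cFrac σ / 2) *
    ∫ η in (-Real.pi)..Real.pi, (2 * f x - f (x + η) - f (x - η)) * Kper σ η

/-! ### Auxiliary lemmas -/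

theorem cFrac_pos {σ : ℝ} (h0 : 0 < σ) (h2 : σ < 2) : 0 < cFrac σ := by
  have hπ := Real.pi_pos
  have hΓ : 0 < Real.Gamma (1 + σ) := Real.Gamma_pos_of_pos (by linarith)
  have hcos : 0 < Real.cos ((1 - σ) * Real.pi / 2) := by
    apply Real.cos_pos_of_mem_Ioo
    constructor <;> [nlinarith; nlinarith]
  exact div_pos (mul_pos hΓ hcos) hπ

theorem Kper_summable (σ : ℝ) (hσ : 0 < σ) (η : ℝ) :
    Summable (fun k : ℤ => |η + 2 * (k : ℝ) * Real.pi| ^ (-(1 + σ))) := by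
  have h2π : (0:ℝ) < 2 * π := by positivity
  have base := (Real.summable_one_div_int_add_rpow (η / (2 * π)) (1 + σ)).mpr (by linarith)
  refine (base.mul_left ((2 * π) ^ (-(1 + σ)))).congr fun k => ?_
  have hx : η + 2 * (k:ℝ) * π = (2 * π) * ((k:ℝ) + η / (2 * π)) := by field_simp; ring
  rw [hx, abs_mul, abs_of_pos h2π, Real.mul_rpow h2π.le (abs_nonneg _),
    Real.rpow_neg (abs_nonneg _), one_div]

theorem Kper_nonneg (σ η : ℝ) : 0 ≤ Kper σ η :=
  tsum_nonneg fun _ => Real.rpow_nonneg (abs_nonneg _) _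

theorem Kper_term_measurable (σ : ℝ) (k : ℤ) :
    Measurable fun η : ℝ => |η + 2 * (k : ℝ) * Real.pi| ^ (-(1 + σ)) := by
  measurability

theorem Kper_measurable (σ : ℝ) (hσ : 0 < σ) : Measurable (Kper σ) := by
  set e : ℕ ≃ ℤ := Equiv.intEquivNat.symm with he
  have hmeas : ∀ n : ℕ, Measurable fun η : ℝ =>
      ∑ i ∈ Finset.range n, |η + 2 * ((e i : ℤ) : ℝ) * Real.pi| ^ (-(1 + σ)) :=
    fun n => Finset.measurable_sum _ fun i _ => Kper_term_measurable σ (e i)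
  apply measurable_of_tendsto_metrizable hmeas
  rw [tendsto_pi_nhds]
  intro η
  exact ((Equiv.hasSum_iff e).mpr (Kper_summable σ hσ η).hasSum).tendsto_sum_nat

theorem Kper_bound (σ : ℝ) (hσ : 0 < σ) (η : ℝ) (hη : |η| ≤ π) :
    Kper σ η ≤ |η| ^ (-(1 + σ)) + π ^ (-(1 + σ)) * ∑' k : ℤ, |(k:ℝ)| ^ (-(1 + σ)) := by
  have hs := Kper_summable σ hσ η
  have hT : Summable fun k : ℤ => |(k:ℝ)| ^ (-(1 + σ)) := summable_abs_int_rpow (by linarith)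
  rw [show Kper σ η = ∑' k : ℤ, |η + 2 * (k:ℝ) * Real.pi| ^ (-(1+σ)) from rfl,
    Summable.tsum_eq_add_tsum_ite hs 0]
  have h0 : |η + 2 * ((0:ℤ):ℝ) * Real.pi| ^ (-(1+σ)) = |η| ^ (-(1+σ)) := by norm_num
  rw [h0, ← tsum_mul_left]
  refine add_le_add_right (Summable.tsum_le_tsum ?_ ?_ (hT.mul_left _)) _
  · intro k
    by_cases hk : k = 0
    · simp only [if_pos hk]; positivity
    · simp only [if_neg hk]
      have hk1 : (1:ℝ) ≤ |(k:ℝ)| := by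
        rw [← Int.cast_abs]; exact_mod_cast Int.one_le_abs (by exact_mod_cast hk)
      have hkpos : (0:ℝ) < π * |(k:ℝ)| := by positivity
      have hle : π * |(k:ℝ)| ≤ |η + 2 * (k:ℝ) * Real.pi| := by
        have habs : |2 * (k:ℝ) * Real.pi| = 2 * |(k:ℝ)| * π := by
          rw [abs_mul, abs_mul]; simp [abs_of_pos Real.pi_pos]
        have h2 : |2 * (k:ℝ) * Real.pi| - |η| ≤ |η + 2 * (k:ℝ) * Real.pi| := by
          have := abs_sub_abs_le_abs_sub (2 * (k:ℝ) * Real.pi) (-η)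
          simpa [sub_neg_eq_add, add_comm] using this
        nlinarith [Real.pi_pos]
      calc |η + 2 * (k:ℝ) * Real.pi| ^ (-(1+σ)) ≤ (π * |(k:ℝ)|) ^ (-(1+σ)) :=
            Real.rpow_le_rpow_of_nonpos hkpos hle (by linarith)
        _ = π ^ (-(1+σ)) * |(k:ℝ)| ^ (-(1+σ)) := Real.mul_rpow Real.pi_pos.le (abs_nonneg _)
  · exact hs.summable_of_eq_zero_or_self fun k => by
      by_cases h : k = 0 <;> simp [h]

theorem periodic_deriv' {v : ℝ → ℝ} {c : ℝ} (h : Function.Periodic v c) :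
    Function.Periodic (deriv v) c := by
  intro t
  have hfun : (fun x => v (x + c)) = v := funext h
  rw [← deriv_comp_add_const (f := v) (a := c) (x := t), hfun]

theorem bounded_of_periodic {g : ℝ → ℝ} (hg : Continuous g) {c : ℝ} (hc : 0 < c)
    (h : Function.Periodic g c) : ∃ M, 0 ≤ M ∧ ∀ t, |g t| ≤ M := by
  obtain ⟨C, hC⟩ :=
    (isCompact_Icc (a := (0:ℝ)) (b := c)).exists_bound_of_continuousOn hg.continuousOn
  refine ⟨max C 0, le_max_right _ _, fun t => ?_⟩
  obtain ⟨y, hy, hyeq⟩ := h.exists_mem_Ico₀ hc t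
  rw [hyeq]
  exact le_trans (hC y ⟨hy.1, hy.2.le⟩) (le_max_left _ _)

theorem second_diff_bound {v : ℝ → ℝ} (hv : ContDiff ℝ 2 v) {L : ℝ}
    (hL : ∀ t, |deriv (deriv v) t| ≤ L)
    (x η : ℝ) : |2 * v x - v (x + η) - v (x - η)| ≤ 2 * L * η ^ 2 := by
  have hv1 : Differentiable ℝ v := hv.differentiable (by norm_num)
  have hdv : ContDiff ℝ 1 (deriv v) := by
    have := (contDiff_succ_iff_deriv (n := 1)).mp (by exact_mod_cast hv)
    exact this.2.2
  have hdv1 : Differentiable ℝ (deriv v) := hdv.differentiable (by norm_num)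
  have hlip : ∀ a b : ℝ, |deriv v a - deriv v b| ≤ L * |a - b| := by
    intro a b
    have := Convex.norm_image_sub_le_of_norm_deriv_le (f := deriv v) (s := Set.univ)
      (fun t _ => (hdv1 t)) (fun t _ => hL t) convex_univ (Set.mem_univ b) (Set.mem_univ a)
    simpa [Real.norm_eq_abs] using this
  set g : ℝ → ℝ := fun t => v (x + t) + v (x - t) with hg
  have hgd : ∀ t : ℝ, HasDerivAt g (deriv v (x + t) - deriv v (x - t)) t := by
    intro t
    have h1 : HasDerivAt (fun t => v (x + t)) (deriv v (x + t)) t := by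
      exact (((hv1 (x + t)).hasDerivAt).comp t ((hasDerivAt_id t).const_add x)).congr_deriv (by simp)
    have h2 : HasDerivAt (fun t => v (x - t)) (deriv v (x - t) * (-1)) t :=
      ((hv1 (x - t)).hasDerivAt).comp t ((hasDerivAt_id t).neg.const_add x)
    exact (h1.add h2).congr_deriv (by ring)
  have hbd : ∀ t ∈ Set.uIcc (0:ℝ) η, |deriv v (x + t) - deriv v (x - t)| ≤ 2 * L * |η| := by
    intro t ht
    have htle : |t| ≤ |η| := by
      rw [Set.uIcc_eq_union] at ht
      rcases ht with ht | ht <;> rcases abs_cases η with ⟨he, h0⟩ | ⟨he, h0⟩ <;>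
        simp only [Set.mem_Icc] at ht <;> rw [abs_le] <;> constructor <;> linarith
    calc |deriv v (x + t) - deriv v (x - t)| ≤ L * |(x + t) - (x - t)| := hlip _ _
      _ = L * (2 * |t|) := by rw [show (x + t) - (x - t) = 2 * t by ring, abs_mul]; norm_num
      _ ≤ 2 * L * |η| := by
        have hL0 : 0 ≤ L := le_trans (abs_nonneg _) (hL 0)
        nlinarith [abs_nonneg t]
  have key := Convex.norm_image_sub_le_of_norm_hasDerivWithin_le
    (f := g) (f' := fun t => deriv v (x + t) - deriv v (x - t)) (s := Set.uIcc (0:ℝ) η)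
    (fun t _ => (hgd t).hasDerivWithinAt) (fun t ht => by simpa [Real.norm_eq_abs] using hbd t ht)
    (convex_uIcc _ _) Set.left_mem_uIcc Set.right_mem_uIcc
  have hg0 : g 0 = 2 * v x := by simp [hg]; ring
  have hkey : |g η - g 0| ≤ 2 * L * |η| * |η| := by simpa [Real.norm_eq_abs] using key
  calc |2 * v x - v (x + η) - v (x - η)| = |g η - g 0| := by
        rw [hg0]; rw [abs_sub_comm]; congr 1; simp [hg]; ring
    _ ≤ 2 * L * |η| * |η| := hkey
    _ = 2 * L * η ^ 2 := by rw [mul_assoc, abs_mul_abs_self]; ring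

theorem abs_rpow_II (r : ℝ) (hr : -1 < r) :
    IntervalIntegrable (fun η : ℝ => |η| ^ r) volume (-π) π := by
  have h1 : IntervalIntegrable (fun x : ℝ => |x| ^ r) volume 0 π := by
    refine ((intervalIntegrable_iff_integrableOn_Ioc_of_le Real.pi_pos.le).mpr ?_)
    refine (((intervalIntegrable_iff_integrableOn_Ioc_of_le Real.pi_pos.le).mp
      (intervalIntegral.intervalIntegrable_rpow' hr)).congr_fun ?_ measurableSet_Ioc)
    intro x hx
    simp [abs_of_pos hx.1]
  have h2 : IntervalIntegrable (fun x : ℝ => |x| ^ r) volume (-π) 0 := by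
    have := ((IntervalIntegrable.iff_comp_neg (f := fun x : ℝ => |x| ^ r)).mp h1)
    simp only [abs_neg, neg_zero] at this
    exact this.symm
  exact h2.trans h1

/-- At a global minimum the fractional Laplacian is nonpositive. -/
theorem fracLap_nonpos_at_min {β : ℝ} (hc : 0 ≤ cFrac β) {v : ℝ → ℝ} {x₀ : ℝ}
    (hmin : ∀ y, v x₀ ≤ v y) : fracLap β v x₀ ≤ 0 := by
  have hππ : -π ≤ π := by linarith [Real.pi_pos]
  rw [fracLap, intervalIntegral.integral_of_le hππ]
  apply mul_nonpos_iff.mpr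
  left
  refine ⟨by linarith, ?_⟩
  apply setIntegral_nonpos measurableSet_Ioc
  intro η _
  apply mul_nonpos_of_nonpos_of_nonneg _ (Kper_nonneg β η)
  have h1 := hmin (x₀ + η); have h2 := hmin (x₀ - η); linarith

/-- At a global maximum the fractional Laplacian is nonnegative. -/
theorem fracLap_nonneg_at_max {β : ℝ} (hc : 0 ≤ cFrac β) {v : ℝ → ℝ} {x₁ : ℝ}
    (hmax : ∀ y, v y ≤ v x₁) : 0 ≤ fracLap β v x₁ := by
  have hππ : -π ≤ π := by linarith [Real.pi_pos]
  rw [fracLap, intervalIntegral.integral_of_le hππ]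
  apply mul_nonneg (by linarith)
  apply setIntegral_nonneg measurableSet_Ioc
  intro η _
  apply mul_nonneg _ (Kper_nonneg β η)
  have h1 := hmax (x₁ + η); have h2 := hmax (x₁ - η); linarith

/-- Uniform bound on the fractional Laplacian of a `C²` periodic function. -/
theorem fracLap_bounded {β : ℝ} (hβ0 : 0 < β) (hβ2 : β < 2)
    {v : ℝ → ℝ} (hv : ContDiff ℝ 2 v) (hvper : Function.Periodic v (2 * Real.pi)) :
    ∃ C, ∀ x, |fracLap β v x| ≤ C := by
  have hπ := Real.pi_pos
  have hc : 0 ≤ cFrac β / 2 := by linarith [cFrac_pos hβ0 hβ2]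
  -- bound on the second derivative
  have hdv : ContDiff ℝ 1 (deriv v) := by
    have := (contDiff_succ_iff_deriv (n := 1)).mp (by exact_mod_cast hv)
    exact this.2.2
  have hddc : Continuous (deriv (deriv v)) := (contDiff_one_iff_deriv.mp hdv).2
  have hddper : Function.Periodic (deriv (deriv v)) (2 * Real.pi) :=
    periodic_deriv' (periodic_deriv' hvper)
  obtain ⟨M, hM0, hM⟩ := bounded_of_periodic hddc (by positivity) hddper
  set T : ℝ := π ^ (-(1+β)) * ∑' k : ℤ, |(k:ℝ)| ^ (-(1+β)) with hTdef
  have hT0 : 0 ≤ T :=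
    mul_nonneg (Real.rpow_nonneg hπ.le _)
      (tsum_nonneg fun _ => Real.rpow_nonneg (abs_nonneg _) _)
  set g : ℝ → ℝ := fun η => 2 * M * |η| ^ (1 - β) + 2 * M * T * η ^ 2 with hgdef
  have hg0 : ∀ η, 0 ≤ g η := fun η => by
    apply add_nonneg <;> positivity
  have hgint : IntegrableOn g (Set.Ioc (-π) π) volume := by
    apply Integrable.add
    · exact ((intervalIntegrable_iff_integrableOn_Ioc_of_le (by linarith)).mp
        ((abs_rpow_II (1-β) (by linarith)).const_mul (2*M)))
    · exact (Continuous.integrableOn_Ioc (by continuity))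
  -- pointwise bound
  have hpt : ∀ x η, η ∈ Set.Ioc (-π) π →
      |(2 * v x - v (x + η) - v (x - η)) * Kper β η| ≤ g η := by
    intro x η hη
    have hηabs : |η| ≤ π := abs_le.mpr ⟨hη.1.le, hη.2⟩
    have hK := Kper_bound β hβ0 η hηabs
    have hK0 := Kper_nonneg β η
    have hD := second_diff_bound hv hM x η
    have hsq : η ^ 2 * |η| ^ (-(1+β)) ≤ |η| ^ (1 - β) := by
      rcases eq_or_ne η 0 with h | h
      · simp [h]
        positivity
      · have habs : 0 < |η| := abs_pos.mpr h
        have : η ^ 2 * |η| ^ (-(1+β)) = |η| ^ ((2:ℝ) + -(1+β)) := by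
          rw [Real.rpow_add habs, ← sq_abs, Real.rpow_two]
        rw [this, show (2:ℝ) + -(1+β) = 1 - β by ring]
    calc |(2 * v x - v (x + η) - v (x - η)) * Kper β η|
        = |2 * v x - v (x + η) - v (x - η)| * Kper β η := by
          rw [abs_mul, abs_of_nonneg hK0]
      _ ≤ (2 * M * η ^ 2) * Kper β η := by
          apply mul_le_mul_of_nonneg_right hD hK0
      _ ≤ (2 * M * η ^ 2) * (|η| ^ (-(1+β)) + T) := by
          apply mul_le_mul_of_nonneg_left hK (by positivity)
      _ = 2 * M * (η ^ 2 * |η| ^ (-(1+β))) + 2 * M * T * η ^ 2 := by ring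
      _ ≤ g η := by
          show _ ≤ 2 * M * |η| ^ (1 - β) + 2 * M * T * η ^ 2
          have : 2 * M * (η ^ 2 * |η| ^ (-(1+β))) ≤ 2 * M * |η| ^ (1 - β) := by
            apply mul_le_mul_of_nonneg_left hsq (by positivity)
          linarith
  refine ⟨(cFrac β / 2) * ∫ η in Set.Ioc (-π) π, g η, fun x => ?_⟩
  rw [fracLap, intervalIntegral.integral_of_le (by linarith), abs_mul,
    abs_of_nonneg hc]
  apply mul_le_mul_of_nonneg_left _ hc
  set f : ℝ → ℝ := fun η => (2 * v x - v (x + η) - v (x - η)) * Kper β η with hfdef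
  have hfm : AEStronglyMeasurable f (volume.restrict (Set.Ioc (-π) π)) := by
    apply AEStronglyMeasurable.mul
    · exact (Continuous.aestronglyMeasurable
        ((continuous_const.sub (hv.continuous.comp (continuous_const.add continuous_id))).sub
          (hv.continuous.comp (continuous_const.sub continuous_id))))
    · exact ((Kper_measurable β hβ0).aestronglyMeasurable)
  have hfi : IntegrableOn f (Set.Ioc (-π) π) volume := by
    apply MeasureTheory.Integrable.mono hgint hfm
    filter_upwards [ae_restrict_mem measurableSet_Ioc] with η hη
    rw [Real.norm_eq_abs, Real.norm_eq_abs, abs_of_nonneg (hg0 η)]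
    exact hpt x η hη
  calc |∫ η in Set.Ioc (-π) π, f η| ≤ ∫ η in Set.Ioc (-π) π, |f η| := by
        simpa [Real.norm_eq_abs] using norm_integral_le_integral_norm f
    _ ≤ ∫ η in Set.Ioc (-π) π, g η := by
        apply integral_mono_of_nonneg
        · filter_upwards with η using abs_nonneg _
        · exact hgint
        · filter_upwards [ae_restrict_mem measurableSet_Ioc] with η hη
          exact hpt x η hη

theorem stmt1 (β : ℝ) (hβ0 : 0 < β) (hβ2 : β < 2)
    (v : ℝ → ℝ) (hv : ContDiff ℝ 2 v) (hvper : Function.Periodic v (2 * Real.pi))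
    (u : ℝ → ℝ) (hu : ∀ x, u x = v x + fracLap β v x)
    (hupos : ∀ x, 0 ≤ u x) :
    (∀ x, 0 ≤ v x ∧ v x ≤ ⨆ y, u y) ∧ (∀ x, |v x| ≤ ⨆ y, |u y|) := by
  have hπ := Real.pi_pos
  have hc : 0 ≤ cFrac β := (cFrac_pos hβ0 hβ2).le
  obtain ⟨Bv, _, hBv⟩ := bounded_of_periodic hv.continuous (by positivity) hvper
  obtain ⟨C, hC⟩ := fracLap_bounded hβ0 hβ2 hv hvper
  have hBdd : BddAbove (Set.range u) := by
    refine ⟨Bv + C, ?_⟩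
    rintro _ ⟨x, rfl⟩
    rw [hu x]
    exact add_le_add (le_trans (le_abs_self _) (hBv x)) (le_trans (le_abs_self _) (hC x))
  -- global min and max
  have hIcc : (Set.Icc (0:ℝ) (2*π)).Nonempty := ⟨0, by constructor <;> [rfl; positivity]⟩
  obtain ⟨x₀, _, hx₀⟩ := isCompact_Icc.exists_isMinOn hIcc hv.continuous.continuousOn
  obtain ⟨x₁, _, hx₁⟩ := isCompact_Icc.exists_isMaxOn hIcc hv.continuous.continuousOn
  have hmin : ∀ y, v x₀ ≤ v y := by
    intro y
    obtain ⟨z, hz, hzeq⟩ := hvper.exists_mem_Ico₀ (by positivity) y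
    rw [hzeq]; exact hx₀ ⟨hz.1, hz.2.le⟩
  have hmax : ∀ y, v y ≤ v x₁ := by
    intro y
    obtain ⟨z, hz, hzeq⟩ := hvper.exists_mem_Ico₀ (by positivity) y
    rw [hzeq]; exact hx₁ ⟨hz.1, hz.2.le⟩
  -- nonnegativity
  have hv0 : ∀ x, 0 ≤ v x := by
    intro x
    have h1 : fracLap β v x₀ ≤ 0 := fracLap_nonpos_at_min hc hmin
    have h2 : 0 ≤ u x₀ := hupos x₀
    rw [hu x₀] at h2
    have : 0 ≤ v x₀ := by linarith
    exact le_trans this (hmin x)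
  -- upper bound
  have hvle : ∀ x, v x ≤ ⨆ y, u y := by
    intro x
    have h1 : 0 ≤ fracLap β v x₁ := fracLap_nonneg_at_max hc hmax
    have h2 : v x₁ ≤ u x₁ := by rw [hu x₁]; linarith
    exact le_trans (hmax x) (le_trans h2 (le_ciSup hBdd x₁))
  refine ⟨fun x => ⟨hv0 x, hvle x⟩, fun x => ?_⟩
  rw [abs_of_nonneg (hv0 x)]
  have habs : (fun y => |u y|) = u := funext fun y => abs_of_nonneg (hupos y)
  calc v x ≤ ⨆ y, u y := hvle x
    _ = ⨆ y, |u y| := by rw [habs]
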